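/- Let n ≥ k ≥ 1, d = 2^n, γ = 3/4, ν = 1/2, and define α_k := [d²(d+3)(dγ^k + 3ν^k) − 4(d+1)(d+2)] / [(d²−1)(d+2)(d+4)] and β_k := [d²(d²γ^k − 4) + 4] / [(d²−1)(d²−4)] for d > 2, with β₁ := (3d²−4)/(4(d²−1)) = 2/3 when d = 2. Then: (i) α_k and β_k are monotonically increasing in d (over d = 2^n with n ≥ k) and monotonically decreasing in k; (ii) α_k → γ^k and β_k → γ^k as d → ∞, and 0 < α_k < γ^k, 0 < β_k < γ^k; (iii) for every integer l ≥ 0, γ^{kl}·[1 − kl(3d+1)/(3(d²−1))] ≤ α₁^{kl} ≤ α_k^l ≤ β_k^l ≤ β₁^{kl} ≤ α₁^{kl} + (kld/(d²−1))·γ^{kl}. -/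

import Mathlib

open Filter
open scoped Topology

noncomputable section

namespace ThriftyShadow

/-- the dimension `d = 2^n` as a real number -/
def dimR (n : ℕ) : ℝ := 2 ^ n

/-- the decay coefficient `α_k` for the interleaved Clifford–T ensemble with
`n` qubits and `k` T gates per layer -/
def alphaCoef (n k : ℕ) : ℝ :=
  ((dimR n) ^ 2 * (dimR n + 3) * (dimR n * (3 / 4 : ℝ) ^ k + 3 * (1 / 2 : ℝ) ^ k)
      - 4 * (dimR n + 1) * (dimR n + 2))
    / (((dimR n) ^ 2 - 1) * (dimR n + 2) * (dimR n + 4))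

/-- the decay coefficient `β_k`; for `d = 2` (i.e. `n = 1`, which forces `k = 1`)
it is defined by its limiting value `(3d²−4)/(4(d²−1))` -/
def betaCoef (n k : ℕ) : ℝ :=
  if n = 1 then (3 * (dimR n) ^ 2 - 4) / (4 * ((dimR n) ^ 2 - 1))
  else ((dimR n) ^ 2 * ((dimR n) ^ 2 * (3 / 4 : ℝ) ^ k - 4) + 4)
        / (((dimR n) ^ 2 - 1) * ((dimR n) ^ 2 - 4))

/-! ### auxiliary lemmas -/

lemma dimR_pos (n : ℕ) : 0 < dimR n := pow_pos two_pos n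

lemma pow_le_dimR {k n : ℕ} (h : k ≤ n) : (2:ℝ)^k ≤ dimR n :=
  pow_le_pow_right₀ one_le_two h

lemma two_le_dimR {n : ℕ} (h : 1 ≤ n) : 2 ≤ dimR n := by
  have := pow_le_dimR h; simpa using this

lemma four_le_dimR {n : ℕ} (h : 2 ≤ n) : 4 ≤ dimR n := by
  have := pow_le_dimR h; norm_num at this; linarith

lemma eight_le_dimR {n : ℕ} (h : 3 ≤ n) : 8 ≤ dimR n := by
  have := pow_le_dimR h; norm_num at this; linarith

lemma dimR_mono {n₁ n₂ : ℕ} (h : n₁ ≤ n₂) : dimR n₁ ≤ dimR n₂ :=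
  pow_le_pow_right₀ one_le_two h

def af (d g y : ℝ) : ℝ :=
  (d ^ 2 * (d + 3) * (d * g + 3 * y) - 4 * (d + 1) * (d + 2))
    / ((d ^ 2 - 1) * (d + 2) * (d + 4))

def bf (d g : ℝ) : ℝ := (d ^ 2 * (d ^ 2 * g - 4) + 4) / ((d ^ 2 - 1) * (d ^ 2 - 4))

lemma alphaCoef_eq (n k : ℕ) :
    alphaCoef n k = af (dimR n) ((3/4:ℝ)^k) ((1/2:ℝ)^k) := rfl

lemma betaCoef_eq {n : ℕ} (h : 2 ≤ n) (k : ℕ) :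
    betaCoef n k = bf (dimR n) ((3/4:ℝ)^k) := by
  have : n ≠ 1 := by omega
  simp [betaCoef, bf, this]

lemma aden_pos {d : ℝ} (hd : 2 ≤ d) : 0 < (d ^ 2 - 1) * (d + 2) * (d + 4) := by nlinarith

lemma bden_pos {d : ℝ} (hd : 4 ≤ d) : 0 < (d ^ 2 - 1) * (d ^ 2 - 4) := by
  have h1 : 0 < d ^ 2 - 1 := by nlinarith
  have h2 : 0 < d ^ 2 - 4 := by nlinarith
  positivity

lemma g_pos (k : ℕ) : 0 < (3/4:ℝ)^k := by positivity
lemma y_pos (k : ℕ) : 0 < (1/2:ℝ)^k := by positivity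

lemma g_le {k : ℕ} (hk : 1 ≤ k) : (3/4:ℝ)^k ≤ 3/4 := by
  calc (3/4:ℝ)^k ≤ (3/4:ℝ)^1 := pow_le_pow_of_le_one (by norm_num) (by norm_num) hk
  _ = 3/4 := pow_one _

lemma y_eq (k : ℕ) : (1/2:ℝ)^k = (2/3:ℝ)^k * (3/4:ℝ)^k := by
  rw [← mul_pow]; norm_num

lemma y_le_g {k : ℕ} (hk : 1 ≤ k) : 3 * (1/2:ℝ)^k ≤ 2 * (3/4:ℝ)^k := by
  rw [y_eq]
  have h1 : (2/3:ℝ)^k ≤ 2/3 := by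
    calc (2/3:ℝ)^k ≤ (2/3:ℝ)^1 := pow_le_pow_of_le_one (by norm_num) (by norm_num) hk
    _ = 2/3 := pow_one _
  nlinarith [g_pos k]

lemma y_le_g2 {k : ℕ} (hk : 2 ≤ k) : 9 * (1/2:ℝ)^k ≤ 4 * (3/4:ℝ)^k := by
  rw [y_eq]
  have h1 : (2/3:ℝ)^k ≤ 4/9 := by
    calc (2/3:ℝ)^k ≤ (2/3:ℝ)^2 := pow_le_pow_of_le_one (by norm_num) (by norm_num) hk
    _ = 4/9 := by norm_num
  nlinarith [g_pos k]

lemma gd_ge {k n : ℕ} (h : k ≤ n) : (3/2:ℝ)^k ≤ (3/4:ℝ)^k * dimR n := by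
  have h2 : (3/2:ℝ)^k = (3/4:ℝ)^k * (2:ℝ)^k := by rw [← mul_pow]; norm_num
  rw [h2]
  exact mul_le_mul_of_nonneg_left (pow_le_dimR h) (by positivity)

lemma gd_ge1 {k n : ℕ} (hk : 1 ≤ k) (h : k ≤ n) : (3/2:ℝ) ≤ (3/4:ℝ)^k * dimR n := by
  refine le_trans ?_ (gd_ge h)
  calc (3/2:ℝ) = (3/2:ℝ)^1 := (pow_one _).symm
  _ ≤ (3/2:ℝ)^k := pow_le_pow_right₀ (by norm_num) hk

lemma gd_ge2 {k n : ℕ} (hk : 2 ≤ k) (h : k ≤ n) : (9/4:ℝ) ≤ (3/4:ℝ)^k * dimR n := by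
  refine le_trans ?_ (gd_ge h)
  calc (9/4:ℝ) = (3/2:ℝ)^2 := by norm_num
  _ ≤ (3/2:ℝ)^k := pow_le_pow_right₀ (by norm_num) hk

lemma gd_ge_succ {k n : ℕ} (hk : 2 ≤ k) (h : k + 1 ≤ n) :
    (9/2:ℝ) ≤ (3/4:ℝ)^k * dimR n := by
  have h1 : (2:ℝ)^(k+1) ≤ dimR n := pow_le_dimR h
  have h2 : (3/4:ℝ)^k * (2:ℝ)^(k+1) = 2 * (3/2:ℝ)^k := by
    rw [pow_succ, ← mul_assoc, ← mul_pow]; ring_nf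
  have h3 : (3/2:ℝ)^2 ≤ (3/2:ℝ)^k := pow_le_pow_right₀ (by norm_num) hk
  have h4 := mul_le_mul_of_nonneg_left h1 (le_of_lt (g_pos k))
  rw [h2] at h4
  norm_num at h3
  linarith

lemma yd_ge {k n : ℕ} (h : k ≤ n) : 1 ≤ (1/2:ℝ)^k * dimR n := by
  calc (1:ℝ) = (1/2:ℝ)^k * (2:ℝ)^k := by rw [← mul_pow]; norm_num
  _ ≤ (1/2:ℝ)^k * dimR n := mul_le_mul_of_nonneg_left (pow_le_dimR h) (by positivity)
/-! ### monotonicity in `d` -/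

lemma af_mono {g y a b : ℝ} (hg : g ≤ 3/4) (hy0 : 0 ≤ y) (hy : 3*y ≤ 2*g)
    (ha : 2 ≤ a) (hab : a ≤ b) : af a g y ≤ af b g y := by
  have hb : 2 ≤ b := le_trans ha hab
  have ha0 : (0:ℝ) ≤ a := by linarith
  have hb0 : (0:ℝ) ≤ b := by linarith
  rw [af, af, div_le_div_iff₀ (aden_pos ha) (aden_pos hb)]
  rw [← sub_nonneg]
  have key : (b ^ 2 * (b + 3) * (b * g + 3 * y) - 4 * (b + 1) * (b + 2)) *
        ((a ^ 2 - 1) * (a + 2) * (a + 4)) -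
      (a ^ 2 * (a + 3) * (a * g + 3 * y) - 4 * (a + 1) * (a + 2)) *
        ((b ^ 2 - 1) * (b + 2) * (b + 4)) =
      (b - a) * ( ((4*g-6*y)/3) *
          (48 + 88*b + 30*b^2 + 2*b^3 + 88*a + 138*a*b + (121/2:ℝ)*a*b^2 + (15/2:ℝ)*a*b^3
            + 30*a^2 + (121/2:ℝ)*a^2*b + (189/4:ℝ)*a^2*b^2 + (37/4:ℝ)*a^2*b^3 + 2*a^3
            + (15/2:ℝ)*a^3*b + (37/4:ℝ)*a^3*b^2 + (9/4:ℝ)*a^3*b^3)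
        + (2*y) *
          (48 + 52*b + 18*b^2 + 2*b^3 + 52*a + 99*a*b + (103/2:ℝ)*a*b^2 + (15/2:ℝ)*a*b^3
            + 18*a^2 + (103/2:ℝ)*a^2*b + (123/4:ℝ)*a^2*b^2 + (19/4:ℝ)*a^2*b^3 + 2*a^3
            + (15/2:ℝ)*a^3*b + (19/4:ℝ)*a^3*b^2 + (3/4:ℝ)*a^3*b^3)
        + (1 - 4*g/3) *
          (48 + 88*b + 48*b^2 + 8*b^3 + 88*a + 156*a*b + 80*a*b^2 + 12*a*b^3 + 48*a^2
            + 80*a^2*b + 36*a^2*b^2 + 4*a^2*b^3 + 8*a^3 + 12*a^3*b + 4*a^3*b^2) ) := by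
    ring
  rw [key]
  have c1 : (0:ℝ) ≤ (4*g-6*y)/3 := by linarith
  have c2 : (0:ℝ) ≤ 2*y := by linarith
  have c3 : (0:ℝ) ≤ 1 - 4*g/3 := by linarith
  have hba : (0:ℝ) ≤ b - a := by linarith
  positivity

lemma bf_mono {g a b : ℝ} (hg0 : 0 ≤ g) (hg : g ≤ 3/4)
    (ha : 4 ≤ a) (hab : a ≤ b) : bf a g ≤ bf b g := by
  have hb : 4 ≤ b := le_trans ha hab
  rw [bf, bf, div_le_div_iff₀ (bden_pos ha) (bden_pos hb)]
  rw [← sub_nonneg]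
  have key : (b ^ 2 * (b ^ 2 * g - 4) + 4) * ((a ^ 2 - 1) * (a ^ 2 - 4)) -
      (a ^ 2 * (a ^ 2 * g - 4) + 4) * ((b ^ 2 - 1) * (b ^ 2 - 4)) =
      (b^2 - a^2) * ( (g/3) * ((a^2-4)*(b^2-4)) + ((12-16*g)/3) * ((a^2-1)*(b^2-1)) ) := by
    ring
  rw [key]
  have hba : (0:ℝ) ≤ b^2 - a^2 := by nlinarith
  have c1 : (0:ℝ) ≤ (g/3) * ((a^2-4)*(b^2-4)) := by
    have h1 : (0:ℝ) ≤ a^2-4 := by nlinarith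
    have h2 : (0:ℝ) ≤ b^2-4 := by nlinarith
    positivity
  have c2 : (0:ℝ) ≤ ((12-16*g)/3) * ((a^2-1)*(b^2-1)) := by
    have h1 : (0:ℝ) ≤ a^2-1 := by nlinarith
    have h2 : (0:ℝ) ≤ b^2-1 := by nlinarith
    have h3 : (0:ℝ) ≤ (12-16*g)/3 := by linarith
    positivity
  nlinarith [mul_nonneg hba (by linarith : (0:ℝ) ≤ (g/3) * ((a^2-4)*(b^2-4)) + ((12-16*g)/3) * ((a^2-1)*(b^2-1)))]

lemma b1_mono {a b : ℝ} (ha : 2 ≤ a) (hab : a ≤ b) :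
    (3*a^2 - 4) / (4*(a^2-1)) ≤ (3*b^2 - 4) / (4*(b^2-1)) := by
  have hb : 2 ≤ b := le_trans ha hab
  have h1 : (0:ℝ) < 4*(a^2-1) := by nlinarith
  have h2 : (0:ℝ) < 4*(b^2-1) := by nlinarith
  rw [div_le_div_iff₀ h1 h2]
  nlinarith
/-! ### bounds and submultiplicativity at the level of `af`/`bf`  -/

lemma af_pos {d g y : ℝ} (hd : 2 ≤ d) (hgd : 3/2 ≤ g * d) (hyd : 1 ≤ y * d) :
    0 < af d g y := by
  apply div_pos _ (aden_pos hd)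
  nlinarith [mul_le_mul_of_nonneg_right hgd (by nlinarith : (0:ℝ) ≤ d^2*(d+3)),
    mul_le_mul_of_nonneg_right hyd (by nlinarith : (0:ℝ) ≤ 3*d*(d+3))]

lemma af_lt {d g y : ℝ} (hd : 4 ≤ d) (hg0 : 0 ≤ g) (hy : 3 * y ≤ 2 * g) :
    af d g y < g := by
  rw [af, div_lt_iff₀ (aden_pos (by linarith))]
  nlinarith [mul_le_mul_of_nonneg_right hy (by nlinarith : (0:ℝ) ≤ d^2*(d+3)),
    mul_nonneg hg0 (by nlinarith : (0:ℝ) ≤ d^3 + d^2 - 6*d - 8)]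

lemma bf_pos {d g : ℝ} (hd : 4 ≤ d) (hgd : 3/2 ≤ g * d) : 0 < bf d g := by
  apply div_pos _ (bden_pos hd)
  nlinarith [mul_le_mul_of_nonneg_right hgd (by positivity : (0:ℝ) ≤ d^3)]

lemma bf_lt {d g : ℝ} (hd : 4 ≤ d) (hg : g ≤ 3/4) : bf d g < g := by
  rw [bf, div_lt_iff₀ (bden_pos hd)]
  nlinarith [mul_nonneg (by linarith : (0:ℝ) ≤ 3/4 - g) (by nlinarith : (0:ℝ) ≤ 5*d^2-4)]

lemma af_le_bf1 {d : ℝ} (hd : 4 ≤ d) : af d (3/4) (1/2) ≤ bf d (3/4) := by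
  rw [af, bf, div_le_div_iff₀ (aden_pos (by linarith)) (bden_pos hd)]
  rw [← sub_nonneg]
  have key : (d ^ 2 * (d ^ 2 * (3/4) - 4) + 4) * ((d ^ 2 - 1) * (d + 2) * (d + 4)) -
      (d ^ 2 * (d + 3) * (d * (3/4) + 3 * (1/2)) - 4 * (d + 1) * (d + 2)) *
        ((d ^ 2 - 1) * (d ^ 2 - 4)) =
      (d ^ 2 - 1) * (d + 2) * (3*d) * ((1/4)*d^3 + d^2 - d - 4) := by ring
  rw [key]
  have h1 : (0:ℝ) ≤ (d^2-1)*(d+2) := by nlinarith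
  have h2 : (0:ℝ) ≤ (1/4)*d^3 + d^2 - d - 4 := by nlinarith
  have h3 : (0:ℝ) ≤ 3*d := by linarith
  positivity

lemma af_le_bf2 {d g y : ℝ} (hd : 4 ≤ d) (hy : 9 * y ≤ 4 * g)
    (hgd : 9/4 ≤ g * d) : af d g y ≤ bf d g := by
  rw [af, bf, div_le_div_iff₀ (aden_pos (by linarith)) (bden_pos hd)]
  rw [← sub_nonneg]
  have key : (d ^ 2 * (d ^ 2 * g - 4) + 4) * ((d ^ 2 - 1) * (d + 2) * (d + 4)) -
      (d ^ 2 * (d + 3) * (d * g + 3 * y) - 4 * (d + 1) * (d + 2)) *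
        ((d ^ 2 - 1) * (d ^ 2 - 4)) =
      (d ^ 2 - 1) * (d + 2) *
        (3*g*d^3*(d+2) - 3*y*d^2*(d+3)*(d-2) - 12*d*(d+1)) := by ring
  rw [key]
  have hden : (0:ℝ) ≤ (d^2-1)*(d+2) := by nlinarith
  have hE : (0:ℝ) ≤ 3*g*d^3*(d+2) - 3*y*d^2*(d+3)*(d-2) - 12*d*(d+1) := by
    nlinarith [mul_le_mul_of_nonneg_right hy (by nlinarith : (0:ℝ) ≤ d^2*(d+3)*(d-2)/3),
      mul_le_mul_of_nonneg_right hgd (by nlinarith : (0:ℝ) ≤ (5/3)*d^3+(14/3)*d^2+8*d)]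
  positivity

lemma E2_1 {d : ℝ} (hd : 4 ≤ d) :
    0 ≤ (3/4)*d^2*(3*d+1) - 3*(1/2)*d*(d^2-3*d-2) - 4*(d+1)*(d+2) := by nlinarith

lemma E2_2 {d g y : ℝ} (hd : 8 ≤ d) (hy : 9 * y ≤ 4 * g)
    (hgd : 9/2 ≤ g * d) :
    0 ≤ g*d^2*(3*d+1) - 3*y*d*(d^2-3*d-2) - 4*(d+1)*(d+2) := by
  nlinarith [mul_le_mul_of_nonneg_right hy (by nlinarith : (0:ℝ) ≤ d*(d^2-3*d-2)/3),
    mul_le_mul_of_nonneg_right hgd (by nlinarith : (0:ℝ) ≤ (5/3)*d^2+5*d+8/3)]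

lemma af_step {d g y : ℝ} (hd : 2 ≤ d)
    (hE2 : 0 ≤ g*d^2*(3*d+1) - 3*y*d*(d^2-3*d-2) - 4*(d+1)*(d+2)) :
    (3*d^2 - 3*d - 4) / (4*(d^2-1)) * af d g y ≤ af d (g * (3/4)) (y * (1/2)) := by
  rw [af, af, div_mul_div_comm, div_le_div_iff₀ (by nlinarith [aden_pos hd]) (aden_pos hd)]
  rw [← sub_nonneg]
  have key : (d ^ 2 * (d + 3) * (d * (g * (3/4)) + 3 * (y * (1/2))) - 4 * (d + 1) * (d + 2)) *
        (4 * (d ^ 2 - 1) * ((d ^ 2 - 1) * (d + 2) * (d + 4))) -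
      (3 * d ^ 2 - 3 * d - 4) * (d ^ 2 * (d + 3) * (d * g + 3 * y) - 4 * (d + 1) * (d + 2)) *
        ((d ^ 2 - 1) * (d + 2) * (d + 4)) =
      ((d ^ 2 - 1) * (d + 2) * (d + 4)) * (d * (d+3) *
        (g*d^2*(3*d+1) - 3*y*d*(d^2-3*d-2) - 4*(d+1)*(d+2))) := by ring
  rw [key]
  have h1 : (0:ℝ) ≤ (d ^ 2 - 1) * (d + 2) * (d + 4) := le_of_lt (aden_pos hd)
  have h2 : (0:ℝ) ≤ d * (d+3) := by nlinarith
  exact mul_nonneg h1 (mul_nonneg h2 hE2)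

lemma bf_step {d g : ℝ} (hd : 4 ≤ d) (hg : g ≤ 3/4) :
    bf d (g * (3/4)) ≤ (3*d^2 - 4) / (4*(d^2-1)) * bf d g := by
  rw [bf, bf, div_mul_div_comm, div_le_div_iff₀ (bden_pos hd) (by
      have h1 : (0:ℝ) < d^2-1 := by nlinarith
      have h2 : (0:ℝ) < d^2-4 := by nlinarith
      positivity)]
  rw [← sub_nonneg]
  have key : (3 * d ^ 2 - 4) * (d ^ 2 * (d ^ 2 * g - 4) + 4) *
        ((d ^ 2 - 1) * (d ^ 2 - 4)) -
      (d ^ 2 * (d ^ 2 * (g * (3/4)) - 4) + 4) * (4 * (d ^ 2 - 1) * ((d ^ 2 - 1) * (d ^ 2 - 4))) =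
      ((d ^ 2 - 1) * (d ^ 2 - 4)) * (d^2 * (4*(d^2-1) - g*d^2)) := by ring
  rw [key]
  have h1 : (0:ℝ) ≤ (d^2-1)*(d^2-4) := le_of_lt (bden_pos hd)
  have h2 : (0:ℝ) ≤ 4*(d^2-1) - g*d^2 := by
    nlinarith [mul_le_mul_of_nonneg_right hg (sq_nonneg d)]
  exact mul_nonneg h1 (mul_nonneg (sq_nonneg d) h2)

lemma af_one {d : ℝ} (hd : 2 ≤ d) :
    af d (3/4) (1/2) = (3*d^2 - 3*d - 4) / (4*(d^2-1)) := by
  rw [af]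
  have h1 : (d^2 - 1) * (d+2) * (d+4) ≠ 0 := ne_of_gt (aden_pos hd)
  have h2 : (4:ℝ)*(d^2-1) ≠ 0 := by nlinarith [aden_pos hd]
  field_simp
  ring

lemma bf_one {d : ℝ} (hd : 4 ≤ d) :
    bf d (3/4) = (3*d^2 - 4) / (4*(d^2-1)) := by
  rw [bf]
  have h1 : (d^2 - 1) * (d^2 - 4) ≠ 0 := ne_of_gt (bden_pos hd)
  have h2 : (4:ℝ)*(d^2-1) ≠ 0 := by nlinarith [bden_pos hd]
  rw [div_eq_div_iff h1 h2]
  ring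
/-! ### bounds at the level of the coefficients -/

lemma alpha_pos' {n k : ℕ} (hk : 1 ≤ k) (hkn : k ≤ n) : 0 < alphaCoef n k := by
  rw [alphaCoef_eq]
  exact af_pos (two_le_dimR (le_trans hk hkn)) (gd_ge1 hk hkn) (yd_ge hkn)

lemma alpha_lt' {n k : ℕ} (hk : 1 ≤ k) (hkn : k ≤ n) : alphaCoef n k < (3/4:ℝ)^k := by
  rcases Nat.lt_or_ge n 2 with hn | hn
  · interval_cases n
    · omega
    · have hk1 : k = 1 := by omega
      subst hk1
      norm_num [alphaCoef, dimR]
  · rw [alphaCoef_eq]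
    exact af_lt (four_le_dimR hn) (le_of_lt (g_pos k)) (y_le_g hk)

lemma beta_pos' {n k : ℕ} (hk : 1 ≤ k) (hkn : k ≤ n) : 0 < betaCoef n k := by
  rcases Nat.lt_or_ge n 2 with hn | hn
  · interval_cases n
    · omega
    · norm_num [betaCoef, dimR]
  · rw [betaCoef_eq hn]
    exact bf_pos (four_le_dimR hn) (gd_ge1 hk hkn)

lemma beta_lt' {n k : ℕ} (hk : 1 ≤ k) (hkn : k ≤ n) : betaCoef n k < (3/4:ℝ)^k := by
  rcases Nat.lt_or_ge n 2 with hn | hn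
  · interval_cases n
    · omega
    · have hk1 : k = 1 := by omega
      subst hk1
      norm_num [betaCoef, dimR]
  · rw [betaCoef_eq hn]
    exact bf_lt (four_le_dimR hn) (g_le hk)

lemma alpha_le_beta' {n k : ℕ} (hk : 1 ≤ k) (hkn : k ≤ n) :
    alphaCoef n k ≤ betaCoef n k := by
  rcases Nat.lt_or_ge n 2 with hn | hn
  · interval_cases n
    · omega
    · have hk1 : k = 1 := by omega
      subst hk1
      norm_num [alphaCoef, betaCoef, dimR]
  · rw [betaCoef_eq hn, alphaCoef_eq]
    rcases Nat.lt_or_ge k 2 with hk2 | hk2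
    · have hk1 : k = 1 := by omega
      subst hk1
      simpa [pow_one] using af_le_bf1 (four_le_dimR hn)
    · exact af_le_bf2 (four_le_dimR hn) (y_le_g2 hk2) (gd_ge2 hk2 hkn)

lemma alpha_one_eq {n : ℕ} (hn : 1 ≤ n) :
    alphaCoef n 1 = (3*(dimR n)^2 - 3*(dimR n) - 4) / (4*((dimR n)^2-1)) := by
  have := af_one (two_le_dimR hn)
  rw [alphaCoef_eq]
  simpa [pow_one] using this

lemma beta_one_eq {n : ℕ} (hn : 1 ≤ n) :
    betaCoef n 1 = (3*(dimR n)^2 - 4) / (4*((dimR n)^2-1)) := by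
  rcases Nat.lt_or_ge n 2 with h2 | h2
  · have : n = 1 := by omega
    subst this
    simp [betaCoef]
  · rw [betaCoef_eq h2]
    simpa [pow_one] using bf_one (four_le_dimR h2)

/-! ### submultiplicativity -/

lemma alpha_submult {n : ℕ} : ∀ k, 1 ≤ k → k ≤ n →
    (alphaCoef n 1)^k ≤ alphaCoef n k := by
  intro k
  induction k with
  | zero => omega
  | succ k ih =>
    intro _ hsn
    rcases Nat.eq_zero_or_pos k with hk0 | hk1
    · subst hk0; simp
    · have hn1 : 1 ≤ n := by omega
      have hd2 : 2 ≤ dimR n := two_le_dimR hn1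
      have hih := ih hk1 (by omega)
      have hpos := alpha_pos' le_rfl hn1
      have hE2 : 0 ≤ (3/4:ℝ)^k*(dimR n)^2*(3*(dimR n)+1)
          - 3*(1/2:ℝ)^k*(dimR n)*((dimR n)^2-3*(dimR n)-2)
          - 4*((dimR n)+1)*((dimR n)+2) := by
        rcases Nat.lt_or_ge k 2 with hk2 | hk2
        · have : k = 1 := by omega
          subst this
          have hd4 : 4 ≤ dimR n := four_le_dimR (by omega)
          simpa [pow_one] using E2_1 hd4
        · have hd8 : 8 ≤ dimR n := eight_le_dimR (by omega)
          exact E2_2 hd8 (y_le_g2 hk2) (gd_ge_succ hk2 hsn)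
      calc (alphaCoef n 1)^(k+1) = (alphaCoef n 1)^k * alphaCoef n 1 := pow_succ _ _
      _ ≤ alphaCoef n k * alphaCoef n 1 :=
          mul_le_mul_of_nonneg_right hih (le_of_lt hpos)
      _ = (3*(dimR n)^2 - 3*(dimR n) - 4) / (4*((dimR n)^2-1))
            * af (dimR n) ((3/4:ℝ)^k) ((1/2:ℝ)^k) := by
          rw [alpha_one_eq hn1, alphaCoef_eq]; ring
      _ ≤ af (dimR n) ((3/4:ℝ)^k * (3/4)) ((1/2:ℝ)^k * (1/2)) := af_step hd2 hE2
      _ = alphaCoef n (k+1) := by rw [alphaCoef_eq, pow_succ, pow_succ]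

lemma beta_submult {n : ℕ} : ∀ k, 1 ≤ k → k ≤ n →
    betaCoef n k ≤ (betaCoef n 1)^k := by
  rcases Nat.lt_or_ge n 2 with hn | hn
  · intro k hk hkn
    have : k = 1 := by omega
    subst this
    simp
  · have hn1 : 1 ≤ n := by omega
    have hd4 : 4 ≤ dimR n := four_le_dimR hn
    have hb1 : 0 ≤ betaCoef n 1 := le_of_lt (beta_pos' le_rfl hn1)
    intro k
    induction k with
    | zero => omega
    | succ k ih =>
      intro _ hsn
      rcases Nat.eq_zero_or_pos k with hk0 | hk1
      · subst hk0; simp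
      · have hih := ih hk1 (by omega)
        calc betaCoef n (k+1) = bf (dimR n) ((3/4:ℝ)^k * (3/4)) := by
              rw [betaCoef_eq hn, pow_succ]
        _ ≤ (3*(dimR n)^2 - 4) / (4*((dimR n)^2-1)) * bf (dimR n) ((3/4:ℝ)^k) :=
            bf_step hd4 (g_le hk1)
        _ = betaCoef n 1 * betaCoef n k := by rw [beta_one_eq hn1, betaCoef_eq hn]
        _ ≤ betaCoef n 1 * (betaCoef n 1)^k := mul_le_mul_of_nonneg_left hih hb1
        _ = (betaCoef n 1)^(k+1) := (pow_succ' _ _).symm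
/-! ### monotonicity in `k` -/

lemma alpha_anti {n k₁ k₂ : ℕ} (hk : 1 ≤ k₁) (h12 : k₁ ≤ k₂) (h2n : k₂ ≤ n) :
    alphaCoef n k₂ ≤ alphaCoef n k₁ := by
  have hd : 2 ≤ dimR n := two_le_dimR (by omega)
  have hg : (3/4:ℝ)^k₂ ≤ (3/4:ℝ)^k₁ :=
    pow_le_pow_of_le_one (by norm_num) (by norm_num) h12
  have hy : (1/2:ℝ)^k₂ ≤ (1/2:ℝ)^k₁ :=
    pow_le_pow_of_le_one (by norm_num) (by norm_num) h12
  have hd0 : (0:ℝ) ≤ dimR n := le_of_lt (dimR_pos n)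
  have e1 : (0:ℝ) ≤ (dimR n)^3*(dimR n+3) :=
    mul_nonneg (pow_nonneg hd0 3) (by linarith)
  have e2 : (0:ℝ) ≤ 3*(dimR n)^2*(dimR n+3) := by
    have := mul_nonneg (pow_nonneg hd0 2) (show (0:ℝ) ≤ dimR n+3 by linarith)
    linarith
  rw [alphaCoef_eq, alphaCoef_eq, af, af]
  apply div_le_div_of_nonneg_right _ (le_of_lt (aden_pos hd))
  nlinarith [mul_le_mul_of_nonneg_right hg e1, mul_le_mul_of_nonneg_right hy e2]

lemma beta_anti {n k₁ k₂ : ℕ} (hk : 1 ≤ k₁) (h12 : k₁ ≤ k₂) (h2n : k₂ ≤ n) :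
    betaCoef n k₂ ≤ betaCoef n k₁ := by
  rcases Nat.lt_or_ge n 2 with hn | hn
  · have h1 : k₁ = 1 := by omega
    have h2 : k₂ = 1 := by omega
    subst h1; subst h2; exact le_refl _
  · have hd : 4 ≤ dimR n := four_le_dimR hn
    have hg : (3/4:ℝ)^k₂ ≤ (3/4:ℝ)^k₁ :=
      pow_le_pow_of_le_one (by norm_num) (by norm_num) h12
    rw [betaCoef_eq hn, betaCoef_eq hn, bf, bf]
    apply div_le_div_of_nonneg_right _ (le_of_lt (bden_pos hd))
    nlinarith [mul_le_mul_of_nonneg_right hg (by positivity : (0:ℝ) ≤ (dimR n)^4)]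

/-! ### a geometric-sum bound and Bernoulli -/

lemma geom_bound {x y : ℝ} (hy0 : 0 ≤ y) (hyx : y ≤ x) (hx : x ≤ 3/4) (m : ℕ) :
    x^m ≤ y^m + m * (4/3) * (3/4)^m * (x - y) := by
  induction m with
  | zero => simp
  | succ m ih =>
    have hym : y^m ≤ (3/4:ℝ)^m := pow_le_pow_left₀ hy0 (le_trans hyx hx) m
    have hx0 : (0:ℝ) ≤ x := le_trans hy0 hyx
    have hgm : (0:ℝ) ≤ (3/4:ℝ)^m := by positivity
    have hxy : (0:ℝ) ≤ x - y := by linarith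
    rw [pow_succ, pow_succ, pow_succ]
    push_cast
    nlinarith [mul_le_mul_of_nonneg_left ih hx0,
      mul_le_mul_of_nonneg_left hym hxy,
      mul_nonneg (mul_nonneg (mul_nonneg (by positivity : (0:ℝ) ≤ (m:ℝ)*(4/3)) hgm) hxy)
        (by linarith : (0:ℝ) ≤ 3/4 - x)]
/-! ### limits as `d → ∞` -/

lemma tendsto_dimR : Tendsto dimR atTop atTop :=
  tendsto_pow_atTop_atTop_of_one_lt one_lt_two

lemma tendsto_inv_dimR : Tendsto (fun n => (dimR n)⁻¹) atTop (𝓝 0) :=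
  tendsto_dimR.inv_tendsto_atTop

lemma alpha_tendsto (k : ℕ) :
    Tendsto (fun n : ℕ => alphaCoef n k) atTop (𝓝 ((3/4:ℝ)^k)) := by
  have hF : ContinuousAt (fun u : ℝ =>
      ((1+3*u)*((3/4:ℝ)^k + 3*(1/2:ℝ)^k*u) - 4*u^2*(1+u)*(1+2*u))
        / ((1-u^2)*(1+2*u)*(1+4*u))) 0 := by
    apply ContinuousAt.div (by fun_prop) (by fun_prop)
    norm_num
  have hcomp := (hF.tendsto).comp tendsto_inv_dimR
  have hval : ((1+3*(0:ℝ))*((3/4:ℝ)^k + 3*(1/2:ℝ)^k*0) - 4*0^2*(1+0)*(1+2*0))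
        / ((1-(0:ℝ)^2)*(1+2*0)*(1+4*0)) = (3/4:ℝ)^k := by norm_num
  rw [Function.comp_def] at hcomp
  rw [hval] at hcomp
  apply hcomp.congr'
  filter_upwards [eventually_ge_atTop 1] with n hn
  have hd : 2 ≤ dimR n := two_le_dimR hn
  have h0 : dimR n ≠ 0 := by linarith
  have h1 : (dimR n)^2 - 1 ≠ 0 := by nlinarith
  have h2 : dimR n + 2 ≠ 0 := by linarith
  have h4 : dimR n + 4 ≠ 0 := by linarith
  rw [alphaCoef_eq, af]
  field_simp

lemma beta_tendsto (k : ℕ) :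
    Tendsto (fun n : ℕ => betaCoef n k) atTop (𝓝 ((3/4:ℝ)^k)) := by
  have hF : ContinuousAt (fun u : ℝ =>
      ((3/4:ℝ)^k - 4*u^2 + 4*u^4) / ((1-u^2)*(1-4*u^2))) 0 := by
    apply ContinuousAt.div (by fun_prop) (by fun_prop)
    norm_num
  have hcomp := (hF.tendsto).comp tendsto_inv_dimR
  have hval : ((3/4:ℝ)^k - 4*(0:ℝ)^2 + 4*0^4) / ((1-(0:ℝ)^2)*(1-4*0^2)) = (3/4:ℝ)^k := by
    norm_num
  rw [Function.comp_def] at hcomp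
  rw [hval] at hcomp
  apply hcomp.congr'
  filter_upwards [eventually_ge_atTop 2] with n hn
  have hd : 4 ≤ dimR n := four_le_dimR hn
  have h0 : dimR n ≠ 0 := by linarith
  have h1 : (dimR n)^2 - 1 ≠ 0 := by nlinarith
  have h2 : (dimR n)^2 - 4 ≠ 0 := by nlinarith
  rw [betaCoef_eq hn, bf]
  field_simp

/-- properties of the decay coefficients `α_k` and `β_k`. -/
theorem alpha_beta_coef_properties (k : ℕ) (hk : 1 ≤ k) :
    -- (i) monotonically increasing in `d` (over `d = 2^n` with `n ≥ k`)
    (∀ n₁ n₂ : ℕ, k ≤ n₁ → n₁ ≤ n₂ →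
      alphaCoef n₁ k ≤ alphaCoef n₂ k ∧ betaCoef n₁ k ≤ betaCoef n₂ k)
    -- (i) monotonically decreasing in `k`
    ∧ (∀ (n k₁ k₂ : ℕ), 1 ≤ k₁ → k₁ ≤ k₂ → k₂ ≤ n →
        alphaCoef n k₂ ≤ alphaCoef n k₁ ∧ betaCoef n k₂ ≤ betaCoef n k₁)
    -- (ii) limits as `d → ∞` and bounds
    ∧ Tendsto (fun n : ℕ => alphaCoef n k) atTop (𝓝 ((3 / 4 : ℝ) ^ k))
    ∧ Tendsto (fun n : ℕ => betaCoef n k) atTop (𝓝 ((3 / 4 : ℝ) ^ k))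
    ∧ (∀ n : ℕ, k ≤ n →
        0 < alphaCoef n k ∧ alphaCoef n k < (3 / 4 : ℝ) ^ k
        ∧ 0 < betaCoef n k ∧ betaCoef n k < (3 / 4 : ℝ) ^ k)
    -- (iii) the chain of inequalities
    ∧ (∀ n : ℕ, k ≤ n → ∀ l : ℕ,
        ((3 / 4 : ℝ) ^ (k * l) *
            (1 - (k * l * (3 * dimR n + 1)) / (3 * ((dimR n) ^ 2 - 1)))
          ≤ (alphaCoef n 1) ^ (k * l))
        ∧ (alphaCoef n 1) ^ (k * l) ≤ (alphaCoef n k) ^ l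
        ∧ (alphaCoef n k) ^ l ≤ (betaCoef n k) ^ l
        ∧ (betaCoef n k) ^ l ≤ (betaCoef n 1) ^ (k * l)
        ∧ (betaCoef n 1) ^ (k * l)
            ≤ (alphaCoef n 1) ^ (k * l)
              + (k * l * dimR n / ((dimR n) ^ 2 - 1)) * (3 / 4 : ℝ) ^ (k * l)) := by
  refine ⟨?_, ?_, alpha_tendsto k, beta_tendsto k, ?_, ?_⟩
  · -- monotonicity in d
    intro n₁ n₂ hkn h12
    have hn1 : 1 ≤ n₁ := le_trans hk hkn
    constructor
    · rw [alphaCoef_eq, alphaCoef_eq]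
      exact af_mono (g_le hk) (le_of_lt (y_pos k)) (y_le_g hk) (two_le_dimR hn1)
        (dimR_mono h12)
    · rcases Nat.lt_or_ge k 2 with hk2 | hk2
      · have hk1 : k = 1 := by omega
        subst hk1
        rw [beta_one_eq hn1, beta_one_eq (le_trans hn1 h12)]
        exact b1_mono (two_le_dimR hn1) (dimR_mono h12)
      · have hn2 : 2 ≤ n₁ := le_trans hk2 hkn
        rw [betaCoef_eq hn2, betaCoef_eq (le_trans hn2 h12)]
        exact bf_mono (le_of_lt (g_pos k)) (g_le hk) (four_le_dimR hn2) (dimR_mono h12)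
  · -- monotonicity in k
    intro n k₁ k₂ h1 h12 h2n
    exact ⟨alpha_anti h1 h12 h2n, beta_anti h1 h12 h2n⟩
  · -- bounds
    intro n hkn
    exact ⟨alpha_pos' hk hkn, alpha_lt' hk hkn, beta_pos' hk hkn, beta_lt' hk hkn⟩
  · -- the chain of inequalities
    intro n hkn l
    have hn1 : 1 ≤ n := le_trans hk hkn
    have hd : 2 ≤ dimR n := two_le_dimR hn1
    have hd1 : (0:ℝ) < (dimR n)^2 - 1 := by nlinarith
    have e1 : (dimR n)^2 - 1 ≠ 0 := ne_of_gt hd1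
    have ha0 : 0 ≤ alphaCoef n 1 := le_of_lt (alpha_pos' le_rfl hn1)
    have hab : alphaCoef n 1 ≤ betaCoef n 1 := alpha_le_beta' le_rfl hn1
    have hbg : betaCoef n 1 ≤ 3/4 := by
      have := beta_lt' le_rfl hn1
      rw [pow_one] at this
      linarith
    refine ⟨?_, ?_, ?_, ?_, ?_⟩
    · -- Bernoulli lower bound
      have hX2 : (3*(dimR n)+1)/(3*((dimR n)^2-1)) ≤ 2 := by
        rw [div_le_iff₀ (by linarith)]
        nlinarith
      have hBern := one_add_mul_le_pow
        (show (-2:ℝ) ≤ -((3*(dimR n)+1)/(3*((dimR n)^2-1))) by linarith) (k*l)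
      have hA1 : alphaCoef n 1 = 3/4 * (1 - (3*(dimR n)+1)/(3*((dimR n)^2-1))) := by
        rw [alpha_one_eq hn1]
        field_simp
        ring
      calc (3/4:ℝ)^(k*l) * (1 - ((k:ℝ) * (l:ℝ) * (3*(dimR n)+1))/(3*((dimR n)^2-1)))
          = (3/4:ℝ)^(k*l) * (1 + ((k*l : ℕ):ℝ) * (-((3*(dimR n)+1)/(3*((dimR n)^2-1))))) := by
            push_cast
            ring
        _ ≤ (3/4:ℝ)^(k*l) * (1 - (3*(dimR n)+1)/(3*((dimR n)^2-1)))^(k*l) :=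
            mul_le_mul_of_nonneg_left hBern (by positivity)
        _ = (alphaCoef n 1)^(k*l) := by rw [hA1, mul_pow]
    · rw [pow_mul]
      exact pow_le_pow_left₀ (pow_nonneg ha0 k) (alpha_submult k hk hkn) l
    · exact pow_le_pow_left₀ (le_of_lt (alpha_pos' hk hkn)) (alpha_le_beta' hk hkn) l
    · rw [pow_mul]
      exact pow_le_pow_left₀ (le_of_lt (beta_pos' hk hkn)) (beta_submult k hk hkn) l
    · have hgb := geom_bound ha0 hab hbg (k*l)
      have hdiff : betaCoef n 1 - alphaCoef n 1 = 3*(dimR n)/(4*((dimR n)^2-1)) := by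
        rw [alpha_one_eq hn1, beta_one_eq hn1]
        field_simp
        ring
      calc (betaCoef n 1)^(k*l)
          ≤ (alphaCoef n 1)^(k*l)
            + ((k*l : ℕ):ℝ) * (4/3) * (3/4)^(k*l) * (betaCoef n 1 - alphaCoef n 1) := hgb
        _ = (alphaCoef n 1)^(k*l)
            + ((k:ℝ) * (l:ℝ) * (dimR n) / ((dimR n)^2-1)) * (3/4:ℝ)^(k*l) := by
            rw [hdiff]
            push_cast
            field_simp

end ThriftyShadow
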